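/- Fix q ≥ 1, real numbers x₁,…,xₙ > 0 and coefficients c₁,…,cₙ ∈ ℝ, and set ηₙ(t) = −(1/n)Σⱼ cⱼ·min{xⱼ,t} − (1/n)Σⱼ 1{xⱼ ≤ t}. Then lim_{a→∞} a^{q+1} ∫₀^∞ |ηₙ(t)|^q e^{−a t} dt = Γ(q+1)·| (1/n) Σ_{j=1}^n cⱼ |^q, where Γ is the Gamma function. -/

import Mathlib

open MeasureTheory Set Filter

lemma aux_int_rpow (q a : ℝ) (hq : 0 ≤ q) (ha : 0 < a) :
    IntegrableOn (fun t : ℝ => t ^ q * Real.exp (-a * t)) (Ioi 0) := by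
  have := integrableOn_rpow_mul_exp_neg_mul_rpow (s := q) (p := 1) (by linarith) one_pos ha
  simpa [Real.rpow_one] using this

lemma aux_int_gamma (q a : ℝ) (hq : 0 ≤ q) (ha : 0 < a) :
    ∫ t in Ioi (0 : ℝ), t ^ q * Real.exp (-a * t) = (1 / a) ^ (q + 1) * Real.Gamma (q + 1) := by
  have h := Real.integral_rpow_mul_exp_neg_mul_Ioi (a := q + 1) (r := a) (by linarith) ha
  rw [← h]
  refine setIntegral_congr_fun measurableSet_Ioi (fun t ht => ?_)
  simp [neg_mul, add_sub_cancel_right]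

/-- The case `a → ∞`, deterministic core: for
`ηₙ(t) = −(1/n)Σⱼ cⱼ min{xⱼ,t} − (1/n)Σⱼ 1{xⱼ ≤ t}` with `xⱼ > 0`, one has
`lim_{a→∞} a^{q+1} ∫₀^∞ |ηₙ(t)|^q e^{−a t} dt = Γ(q+1)·|(1/n) Σⱼ cⱼ|^q`. -/
theorem stmt9 (q : ℝ) (hq : 1 ≤ q) (n : ℕ) (hn : 0 < n)
    (x c : Fin n → ℝ) (hx : ∀ j, 0 < x j) :
    Tendsto
      (fun a : ℝ => a ^ (q + 1) *
        ∫ t in Ioi (0 : ℝ),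
          |-((n : ℝ)⁻¹ * ∑ j, c j * min (x j) t)
            - (n : ℝ)⁻¹ * ∑ j, (if x j ≤ t then (1 : ℝ) else 0)| ^ q
          * Real.exp (-a * t))
      atTop
      (nhds (Real.Gamma (q + 1) * |(n : ℝ)⁻¹ * ∑ j, c j| ^ q)) := by
  have hq0 : (0 : ℝ) ≤ q := by linarith
  set m : ℝ := (n : ℝ)⁻¹ * ∑ j, c j with hm
  set η : ℝ → ℝ := fun t =>
    -((n : ℝ)⁻¹ * ∑ j, c j * min (x j) t)
      - (n : ℝ)⁻¹ * ∑ j, (if x j ≤ t then (1 : ℝ) else 0) with hη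
  have hne : (Finset.univ : Finset (Fin n)).Nonempty :=
    ⟨⟨0, hn⟩, Finset.mem_univ _⟩
  set δ : ℝ := Finset.univ.inf' hne x with hδdef
  have hδpos : 0 < δ := (Finset.lt_inf'_iff hne).mpr fun j _ => hx j
  have hδle : ∀ j, δ ≤ x j := fun j => Finset.inf'_le _ (Finset.mem_univ j)
  -- η on (0, δ)
  have hη_small : ∀ t : ℝ, 0 < t → t < δ → η t = -(m * t) := by
    intro t ht htδ
    have h1 : ∀ j, min (x j) t = t := fun j => min_eq_right (le_of_lt (lt_of_lt_of_le htδ (hδle j)))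
    have h2 : ∀ j, ¬ x j ≤ t := fun j => not_le.mpr (lt_of_lt_of_le htδ (hδle j))
    simp only [hη, h1, h2, if_false, Finset.sum_const_zero, mul_zero, sub_zero]
    rw [← Finset.sum_mul, hm]; ring
  -- global bound on η
  set B : ℝ := (n : ℝ)⁻¹ * ∑ j, |c j| * x j + 1 with hB
  have hB1 : (1 : ℝ) ≤ B := by
    have h : (0 : ℝ) ≤ (n : ℝ)⁻¹ * ∑ j, |c j| * x j := by
      apply mul_nonneg (by positivity)
      exact Finset.sum_nonneg fun j _ => mul_nonneg (abs_nonneg _) (hx j).le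
    rw [hB]; linarith
  have hηB : ∀ t : ℝ, 0 < t → |η t| ≤ B := by
    intro t ht
    have h1 : |(n : ℝ)⁻¹ * ∑ j, c j * min (x j) t| ≤ (n : ℝ)⁻¹ * ∑ j, |c j| * x j := by
      rw [abs_mul, abs_of_nonneg (by positivity : (0:ℝ) ≤ (n : ℝ)⁻¹)]
      apply mul_le_mul_of_nonneg_left _ (by positivity)
      refine (Finset.abs_sum_le_sum_abs _ _).trans (Finset.sum_le_sum fun j _ => ?_)
      rw [abs_mul]
      apply mul_le_mul_of_nonneg_left _ (abs_nonneg _)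
      rw [abs_of_nonneg (le_min (hx j).le ht.le)]
      exact min_le_left _ _
    have h2 : |(n : ℝ)⁻¹ * ∑ j, (if x j ≤ t then (1:ℝ) else 0)| ≤ 1 := by
      rw [abs_mul, abs_of_nonneg (by positivity : (0:ℝ) ≤ (n : ℝ)⁻¹)]
      have h3 : |∑ j, (if x j ≤ t then (1:ℝ) else 0)| ≤ (n : ℝ) := by
        refine (Finset.abs_sum_le_sum_abs _ _).trans ?_
        calc (∑ j : Fin n, |if x j ≤ t then (1:ℝ) else 0|) ≤ ∑ _j : Fin n, 1 := by
              apply Finset.sum_le_sum; intro j _; split <;> simp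
          _ = (n : ℝ) := by simp
      calc (n : ℝ)⁻¹ * |∑ j, (if x j ≤ t then (1:ℝ) else 0)| ≤ (n : ℝ)⁻¹ * n :=
            mul_le_mul_of_nonneg_left h3 (by positivity)
        _ = 1 := by field_simp
    calc |η t| ≤ |(n : ℝ)⁻¹ * ∑ j, c j * min (x j) t|
          + |(n : ℝ)⁻¹ * ∑ j, (if x j ≤ t then (1:ℝ) else 0)| := by
          rw [hη]; simpa using abs_sub (-((n : ℝ)⁻¹ * ∑ j, c j * min (x j) t)) ((n : ℝ)⁻¹ * ∑ j, (if x j ≤ t then (1:ℝ) else 0))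
      _ ≤ B := by rw [hB]; linarith
  -- measurability of η
  have hηmeas : Measurable η := by
    apply Measurable.sub
    · apply Measurable.neg
      apply Measurable.const_mul
      exact Finset.measurable_sum _ fun j _ =>
        (measurable_const.min measurable_id).const_mul _
    · apply Measurable.const_mul
      exact Finset.measurable_sum _ fun j _ =>
        Measurable.ite measurableSet_Ici measurable_const measurable_const
  have hgmeas : Measurable fun t => |η t| ^ q := hηmeas.abs.pow_const q
  -- integrability of the main integrand for a > 0
  have hint : ∀ a : ℝ, 0 < a →
      IntegrableOn (fun t => |η t| ^ q * Real.exp (-a * t)) (Ioi 0) := by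
    intro a ha
    have hBint : IntegrableOn (fun t : ℝ => B ^ q * Real.exp (-a * t)) (Ioi 0) :=
      (exp_neg_integrableOn_Ioi 0 ha).const_mul _
    refine hBint.mono' ((hgmeas.mul ((Real.continuous_exp.measurable).comp
      (measurable_id.const_mul (-a)))).aestronglyMeasurable) ?_
    filter_upwards [ae_restrict_mem measurableSet_Ioi] with t ht
    rw [Real.norm_eq_abs, abs_mul, abs_of_nonneg (Real.exp_pos _).le,
      abs_of_nonneg (Real.rpow_nonneg (abs_nonneg _) _)]
    apply mul_le_mul_of_nonneg_right _ (Real.exp_pos _).le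
    exact Real.rpow_le_rpow (abs_nonneg _) (hηB t ht) hq0
  -- the remainder function
  set G : ℝ → ℝ := fun t => |η t| ^ q - |m| ^ q * t ^ q with hG
  have hG0 : ∀ t : ℝ, 0 < t → t < δ → G t = 0 := by
    intro t ht htδ
    have h : |η t| = |m| * t := by
      rw [hη_small t ht htδ, abs_neg, abs_mul, abs_of_nonneg ht.le]
    simp only [hG]
    rw [h, Real.mul_rpow (abs_nonneg _) ht.le, sub_self]
  have hGbound : ∀ t : ℝ, 0 < t → |G t| ≤ B ^ q + |m| ^ q * t ^ q := by
    intro t ht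
    have h1 : |η t| ^ q ≤ B ^ q := Real.rpow_le_rpow (abs_nonneg _) (hηB t ht) hq0
    have h2 : (0:ℝ) ≤ |η t| ^ q := Real.rpow_nonneg (abs_nonneg _) _
    have h3 : (0:ℝ) ≤ |m| ^ q * t ^ q :=
      mul_nonneg (Real.rpow_nonneg (abs_nonneg _) _) (Real.rpow_nonneg ht.le _)
    simp only [hG]
    rw [abs_sub_le_iff]
    constructor <;> linarith
  have hGint : ∀ a : ℝ, 0 < a →
      IntegrableOn (fun t => G t * Real.exp (-a * t)) (Ioi 0) := by
    intro a ha
    have h1 : IntegrableOn (fun t : ℝ => |m| ^ q * (t ^ q * Real.exp (-a * t))) (Ioi 0) :=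
      (aux_int_rpow q a hq0 ha).const_mul _
    have h : IntegrableOn
        (fun t : ℝ => |η t| ^ q * Real.exp (-a * t) - |m| ^ q * (t ^ q * Real.exp (-a * t)))
        (Ioi 0) := (hint a ha).sub h1
    refine h.congr_fun (fun t _ => ?_) measurableSet_Ioi
    simp only [hG]; ring
  -- decomposition for a > 0
  have hdecomp : ∀ a : ℝ, 0 < a →
      a ^ (q + 1) * ∫ t in Ioi (0 : ℝ), |η t| ^ q * Real.exp (-a * t) =
      Real.Gamma (q + 1) * |m| ^ q +
        a ^ (q + 1) * ∫ t in Ioi (0 : ℝ), G t * Real.exp (-a * t) := by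
    intro a ha
    have h1 : IntegrableOn (fun t : ℝ => |m| ^ q * (t ^ q * Real.exp (-a * t))) (Ioi 0) :=
      (aux_int_rpow q a hq0 ha).const_mul _
    have h2 := hint a ha
    have hsplit : ∫ t in Ioi (0 : ℝ), G t * Real.exp (-a * t) =
        (∫ t in Ioi (0 : ℝ), |η t| ^ q * Real.exp (-a * t)) -
        ∫ t in Ioi (0 : ℝ), |m| ^ q * (t ^ q * Real.exp (-a * t)) := by
      rw [← integral_sub h2 h1]
      refine setIntegral_congr_fun measurableSet_Ioi fun t ht => ?_
      simp only [hG]; ring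
    rw [hsplit, integral_const_mul, aux_int_gamma q a hq0 ha]
    have ha' : a ^ (q + 1) * (1 / a) ^ (q + 1) = 1 := by
      rw [← Real.mul_rpow ha.le (by positivity), mul_one_div, div_self ha.ne', Real.one_rpow]
    linear_combination (|m| ^ q * Real.Gamma (q + 1)) * ha'
  -- tail bound constant
  set φ : ℝ → ℝ := fun t => (B ^ q + |m| ^ q * t ^ q) * Real.exp (-t) with hφ
  have hφint : IntegrableOn φ (Ioi 0) := by
    have h1 : IntegrableOn (fun t : ℝ => B ^ q * Real.exp (-1 * t)) (Ioi 0) :=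
      (exp_neg_integrableOn_Ioi 0 one_pos).const_mul _
    have h2 : IntegrableOn (fun t : ℝ => |m| ^ q * (t ^ q * Real.exp (-1 * t))) (Ioi 0) :=
      (aux_int_rpow q 1 hq0 one_pos).const_mul _
    have h : IntegrableOn
        (fun t : ℝ => B ^ q * Real.exp (-1 * t) + |m| ^ q * (t ^ q * Real.exp (-1 * t)))
        (Ioi 0) := h1.add h2
    refine h.congr_fun (fun t _ => ?_) measurableSet_Ioi
    simp only [hφ, neg_one_mul]; ring
  set C : ℝ := ∫ t in Ioi (0 : ℝ), φ t with hC
  have hφ_nonneg : ∀ t : ℝ, 0 < t → 0 ≤ φ t := by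
    intro t ht
    apply mul_nonneg _ (Real.exp_pos _).le
    have : (0:ℝ) ≤ B ^ q := Real.rpow_nonneg (by linarith) _
    have : (0:ℝ) ≤ |m| ^ q * t ^ q :=
      mul_nonneg (Real.rpow_nonneg (abs_nonneg _) _) (Real.rpow_nonneg ht.le _)
    linarith
  have hC0 : 0 ≤ C := by
    rw [hC]
    apply setIntegral_nonneg measurableSet_Ioi
    intro t ht; exact hφ_nonneg t ht
  -- tail estimate
  have htail : ∀ a : ℝ, 2 ≤ a →
      |∫ t in Ioi (0 : ℝ), G t * Real.exp (-a * t)| ≤ Real.exp (-(a - 1) * δ) * C := by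
    intro a ha2
    have ha : (0:ℝ) < a := by linarith
    have step1 : |∫ t in Ioi (0 : ℝ), G t * Real.exp (-a * t)| ≤
        ∫ t in Ioi (0 : ℝ), |G t * Real.exp (-a * t)| := by
      have h := norm_integral_le_integral_norm (μ := volume.restrict (Ioi 0))
        (fun t => G t * Real.exp (-a * t))
      simp only [Real.norm_eq_abs] at h
      exact h
    have step2 : ∫ t in Ioi (0 : ℝ), |G t * Real.exp (-a * t)| ≤
        ∫ t in Ioi (0 : ℝ), φ t * Real.exp (-(a - 1) * δ) := by
      refine setIntegral_mono_on (hGint a ha).abs (hφint.mul_const _)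
        measurableSet_Ioi (fun t ht => ?_)
      rcases lt_or_ge t δ with htδ | htδ
      · rw [hG0 t ht htδ, zero_mul, abs_zero]
        exact mul_nonneg (hφ_nonneg t ht) (Real.exp_pos _).le
      · rw [abs_mul, abs_of_nonneg (Real.exp_pos _).le]
        have hexp : Real.exp (-a * t) ≤ Real.exp (-t) * Real.exp (-(a - 1) * δ) := by
          rw [← Real.exp_add]
          apply Real.exp_le_exp.mpr
          nlinarith
        calc |G t| * Real.exp (-a * t)
            ≤ (B ^ q + |m| ^ q * t ^ q) * (Real.exp (-t) * Real.exp (-(a - 1) * δ)) := by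
              apply mul_le_mul (hGbound t ht) hexp (Real.exp_pos _).le
              have : (0:ℝ) ≤ B ^ q := Real.rpow_nonneg (by linarith) _
              have : (0:ℝ) ≤ |m| ^ q * t ^ q :=
                mul_nonneg (Real.rpow_nonneg (abs_nonneg _) _) (Real.rpow_nonneg ht.le _)
              linarith
          _ = φ t * Real.exp (-(a - 1) * δ) := by simp only [hφ]; ring
    have step3 : ∫ t in Ioi (0 : ℝ), φ t * Real.exp (-(a - 1) * δ) =
        Real.exp (-(a - 1) * δ) * C := by
      rw [integral_mul_const, hC, mul_comm]
    linarith [step1.trans (step2.trans_eq step3)]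
  -- remainder tends to 0
  have hrem : Tendsto (fun a : ℝ => a ^ (q + 1) *
      ∫ t in Ioi (0 : ℝ), G t * Real.exp (-a * t)) atTop (nhds 0) := by
    have hb : Tendsto (fun a : ℝ => a ^ (q + 1) * Real.exp (-δ * a) * (Real.exp δ * C))
        atTop (nhds 0) := by
      have h := tendsto_rpow_mul_exp_neg_mul_atTop_nhds_zero (q + 1) δ hδpos
      simpa using h.mul_const (Real.exp δ * C)
    apply squeeze_zero_norm' _ hb
    filter_upwards [eventually_ge_atTop (2:ℝ)] with a ha2
    have ha : (0:ℝ) < a := by linarith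
    rw [Real.norm_eq_abs, abs_mul, abs_of_nonneg (Real.rpow_nonneg ha.le _)]
    calc a ^ (q + 1) * |∫ t in Ioi (0 : ℝ), G t * Real.exp (-a * t)|
        ≤ a ^ (q + 1) * (Real.exp (-(a - 1) * δ) * C) :=
          mul_le_mul_of_nonneg_left (htail a ha2) (Real.rpow_nonneg ha.le _)
      _ = a ^ (q + 1) * Real.exp (-δ * a) * (Real.exp δ * C) := by
          rw [show (-(a - 1) * δ) = -δ * a + δ by ring, Real.exp_add]; ring
  -- conclusion
  have hfinal : Tendsto (fun a : ℝ => Real.Gamma (q + 1) * |m| ^ q +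
      a ^ (q + 1) * ∫ t in Ioi (0 : ℝ), G t * Real.exp (-a * t)) atTop
      (nhds (Real.Gamma (q + 1) * |m| ^ q)) := by
    simpa using tendsto_const_nhds.add hrem
  show Tendsto (fun a : ℝ => a ^ (q + 1) *
      ∫ t in Ioi (0 : ℝ), |η t| ^ q * Real.exp (-a * t)) atTop
      (nhds (Real.Gamma (q + 1) * |m| ^ q))
  refine Tendsto.congr' ?_ hfinal
  filter_upwards [eventually_gt_atTop (0:ℝ)] with a ha
  exact (hdecomp a ha).symm
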